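/- For each t = 0,…,T−1, H*_t attains its minimum over ℝ; moreover, writing S*_t := min{ x : H*_t(x) = min_{y∈ℝ} H*_t(y) }, the set { x ≤ S*_t : H*_t(x) = H*_t(S*_t) + K_t } is nonempty and has a maximum s*_t, and V*_t(x) = H*_t(S*_t) + K_t for every x < s*_t while V*_t(x) = H*_t(x) for every x ≥ s*_t. -/

import Mathlib

open MeasureTheory Filter Set

private def KConv (K : ℝ) (f : ℝ → ℝ) : Prop :=
  ∀ x y l : ℝ, x ≤ y → 0 ≤ l → l ≤ 1 →
    f (l * x + (1 - l) * y) ≤ l * f x + (1 - l) * (f y + K)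

private lemma KConv.mono {K K' : ℝ} {f : ℝ → ℝ} (h : KConv K f) (hKK' : K ≤ K') : KConv K' f := by
  intro x y l hxy hl0 hl1
  have := h x y l hxy hl0 hl1
  nlinarith [sub_nonneg.mpr hl1]

private lemma kconv_of_convex {f : ℝ → ℝ} (hf : ConvexOn ℝ univ f) : KConv 0 f := by
  intro x y l hxy hl0 hl1
  have := hf.2 (mem_univ x) (mem_univ y) hl0 (by linarith : (0:ℝ) ≤ 1 - l) (by ring)
  simp only [smul_eq_mul] at this
  linarith

private lemma KConv.add {K K' : ℝ} {f g : ℝ → ℝ} (hf : KConv K f) (hg : KConv K' g) :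
    KConv (K + K') (fun x => f x + g x) := by
  intro x y l hxy hl0 hl1
  have h1 := hf x y l hxy hl0 hl1
  have h2 := hg x y l hxy hl0 hl1
  simp only []
  nlinarith

private lemma KConv.smul {K c : ℝ} {f : ℝ → ℝ} (hc : 0 ≤ c) (hf : KConv K f) :
    KConv (c * K) (fun x => c * f x) := by
  intro x y l hxy hl0 hl1
  have h1 := hf x y l hxy hl0 hl1
  simp only []
  nlinarith [mul_le_mul_of_nonneg_left h1 hc]

private lemma stage {K : ℝ} (hK : 0 ≤ K) {H : ℝ → ℝ} (hHc : Continuous H)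
    (hcoer : Tendsto H (cocompact ℝ) atTop) (hk : KConv K H) :
    ∃ S, IsLeast {x | ∀ y, H x ≤ H y} S ∧
    ∃ s, IsGreatest {x | x ≤ S ∧ H x = H S + K} s ∧
      (∀ x, x ≤ s → H S + K ≤ H x) ∧
      (∀ x y, s ≤ x → x ≤ y → H x ≤ H y + K) := by
  obtain ⟨x₀, hx₀⟩ := hHc.exists_forall_le hcoer
  have hMcl : IsClosed {x | ∀ y, H x ≤ H y} := by
    have : {x | ∀ y, H x ≤ H y} = ⋂ y, {x | H x ≤ H y} := by ext x; simp
    rw [this]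
    exact isClosed_iInter fun y => isClosed_le hHc continuous_const
  have hMbdd : BddBelow {x | ∀ y, H x ≤ H y} := by
    obtain ⟨κc, hκc, hκ⟩ := hasBasis_cocompact.eventually_iff.mp
      (hcoer.eventually (eventually_ge_atTop (H x₀ + 1)))
    refine (hκc.bddBelow).mono fun x hx => ?_
    by_contra hxk
    have := hκ hxk
    have h2 := hx x₀
    have this' : H x₀ + 1 ≤ H x := this
    have h2' : H x ≤ H x₀ := h2
    linarith
  set S := sInf {x | ∀ y, H x ≤ H y} with hSdef
  have hSmem : S ∈ {x | ∀ y, H x ≤ H y} := hMcl.csInf_mem ⟨x₀, hx₀⟩ hMbdd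
  have hSleast : IsLeast {x | ∀ y, H x ≤ H y} S := ⟨hSmem, fun x hx => csInf_le hMbdd hx⟩
  refine ⟨S, hSleast, ?_⟩
  have hmin : ∀ y, H S ≤ H y := hSmem
  have hAne : ∃ x, x ≤ S ∧ H x = H S + K := by
    obtain ⟨κc, hκc, hκ⟩ := hasBasis_cocompact.eventually_iff.mp
      (hcoer.eventually (eventually_ge_atTop (H S + K + 1)))
    obtain ⟨lb, hlb⟩ := hκc.bddBelow
    set b := min lb S - 1 with hbdef
    have hbS : b ≤ S := by simp only [hbdef]; have := min_le_right lb S; linarith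
    have hbk : b ∉ κc := by
      intro hb
      have h1 := hlb hb
      have h2 := min_le_left lb S
      simp only [hbdef] at h1
      linarith
    have hHb : H S + K ≤ H b := by have := hκ hbk; linarith
    have : H S + K ∈ Icc (H S) (H b) := ⟨by linarith, hHb⟩
    obtain ⟨x, hx, hfx⟩ := intermediate_value_Icc' hbS hHc.continuousOn this
    exact ⟨x, hx.2, hfx⟩
  have hAcl : IsClosed {x | x ≤ S ∧ H x = H S + K} := by
    exact (isClosed_Iic.preimage continuous_id).inter (isClosed_eq hHc continuous_const)
  have hAbdd : BddAbove {x | x ≤ S ∧ H x = H S + K} := ⟨S, fun x hx => hx.1⟩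
  set s := sSup {x | x ≤ S ∧ H x = H S + K} with hsdef
  have hsmem : s ∈ {x | x ≤ S ∧ H x = H S + K} := hAcl.csSup_mem hAne hAbdd
  have hsgreat : IsGreatest {x | x ≤ S ∧ H x = H S + K} s :=
    ⟨hsmem, fun x hx => le_csSup hAbdd hx⟩
  have hsS : s ≤ S := hsmem.1
  have hs : H s = H S + K := hsmem.2
  refine ⟨s, hsgreat, ?_, ?_⟩
  · intro x hxs
    rcases eq_or_lt_of_le hxs with h | hxs'
    · rw [h]; linarith
    by_contra hcon
    push_neg at hcon
    rcases eq_or_lt_of_le hsS with hsE | hsS'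
    · have hK0 : K = 0 := by rw [hsE] at hs; linarith
      have := hmin x
      linarith
    · set l := (S - s) / (S - x) with hldef
      have hxS : x < S := lt_of_lt_of_le hxs' hsS
      have hl0 : 0 < l := div_pos (by linarith) (by linarith)
      have hl1 : l ≤ 1 := (div_le_one (by linarith)).2 (by linarith)
      have hl2 : l * (S - x) = S - s := div_mul_cancel₀ _ (by linarith : S - x ≠ 0)
      have hco : l * x + (1 - l) * S = s := by linear_combination (-1 : ℝ) * hl2
      have h1 := hk x S l hxS.le hl0.le hl1
      rw [hco, hs] at h1
      nlinarith [mul_lt_mul_of_pos_left hcon hl0]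
  · intro x y hsx hxy
    rcases le_or_gt x S with hxS | hSx
    · have hxK : H x ≤ H S + K := by
        rcases eq_or_lt_of_le hsS with hsE | hsS'
        · have hxs : x = s := le_antisymm (hsE ▸ hxS) hsx
          rw [hxs, hs]
        · set l := (S - x) / (S - s) with hldef
          have hl0 : 0 ≤ l := div_nonneg (by linarith) (by linarith)
          have hl1 : l ≤ 1 := (div_le_one (by linarith)).2 (by linarith)
          have hl2 : l * (S - s) = S - x := div_mul_cancel₀ _ (by linarith : S - s ≠ 0)
          have hco : l * s + (1 - l) * S = x := by linear_combination (-1 : ℝ) * hl2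
          have h1 := hk s S l hsS hl0 hl1
          rw [hco, hs] at h1
          nlinarith
      have := hmin y
      linarith
    · have hSy : S < y := lt_of_lt_of_le hSx hxy
      set l := (y - x) / (y - S) with hldef
      have hl0 : 0 ≤ l := div_nonneg (by linarith) (by linarith)
      have hl1 : l ≤ 1 := (div_le_one (by linarith)).2 (by linarith)
      have hl2 : l * (y - S) = y - x := div_mul_cancel₀ _ (by linarith : y - S ≠ 0)
      have hco : l * S + (1 - l) * y = x := by linear_combination (-1 : ℝ) * hl2
      have h1 := hk S y l hSy.le hl0 hl1
      rw [hco] at h1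
      have h2 : H S ≤ H x := hmin x
      have h3 : (1 - l) * H x ≤ (1 - l) * (H y + K) := by nlinarith
      have h4 : 0 < 1 - l := by
        rw [hldef]
        have : (y - x) / (y - S) < 1 := (div_lt_one (by linarith)).2 (by linarith)
        linarith
      nlinarith

private lemma stageV {K : ℝ} (hK : 0 ≤ K) {H V : ℝ → ℝ} {S s : ℝ}
    (hmin : ∀ y, H S ≤ H y) (hsS : s ≤ S) (hs : H s = H S + K)
    (hlow : ∀ x, x ≤ s → H S + K ≤ H x)
    (hup : ∀ x y, s ≤ x → x ≤ y → H x ≤ H y + K)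
    (hV : ∀ x, V x = sInf ((fun y => K * (if x < y then (1:ℝ) else 0) + H y) '' Ici x)) :
    (∀ x, x < s → V x = H S + K) ∧ (∀ x, s ≤ x → V x = H x) := by
  constructor
  · intro x hx
    rw [hV x]
    have hxS : x < S := lt_of_lt_of_le hx hsS
    have : IsLeast ((fun y => K * (if x < y then (1:ℝ) else 0) + H y) '' Ici x) (H S + K) := by
      constructor
      · refine ⟨S, hxS.le, ?_⟩
        simp only [if_pos hxS]
        ring
      · rintro _ ⟨y, hy, rfl⟩
        simp only
        rcases eq_or_lt_of_le (mem_Ici.mp hy) with h | h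
        · rw [if_neg (by rw [h]; exact lt_irrefl y)]
          have := hlow y (by rw [← h]; exact hx.le)
          linarith
        · rw [if_pos h]
          have := hmin y
          linarith
    rw [this.csInf_eq]
  · intro x hx
    rw [hV x]
    have : IsLeast ((fun y => K * (if x < y then (1:ℝ) else 0) + H y) '' Ici x) (H x) := by
      constructor
      · exact ⟨x, le_refl x, by simp⟩
      · rintro _ ⟨y, hy, rfl⟩
        simp only
        rcases eq_or_lt_of_le (mem_Ici.mp hy) with h | h
        · rw [if_neg (by rw [h]; exact lt_irrefl y), h]
          linarith
        · rw [if_pos h]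
          have := hup x y hx h.le
          linarith
    rw [this.csInf_eq]

private lemma Vprops {K : ℝ} (hK : 0 ≤ K) {H V : ℝ → ℝ} {S s : ℝ} (hHc : Continuous H)
    (hmin : ∀ y, H S ≤ H y) (hs : H s = H S + K) (hk : KConv K H)
    (hV1 : ∀ x, x < s → V x = H S + K) (hV2 : ∀ x, s ≤ x → V x = H x)
    (hup : ∀ x y, s ≤ x → x ≤ y → H x ≤ H y + K) :
    Continuous V ∧ KConv K V ∧ (∀ x, H S ≤ V x) ∧ (∀ x, x ≤ s - 1 → V x = H S + K) := by
  have hVge : ∀ w, H S ≤ V w := by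
    intro w
    rcases le_or_gt s w with h | h
    · rw [hV2 w h]; exact hmin w
    · rw [hV1 w h]; linarith
  have hVe : V = fun x => if s ≤ x then H x else H S + K := by
    funext x
    rcases le_or_gt s x with h | h
    · rw [if_pos h, hV2 x h]
    · rw [if_neg (not_le.mpr h), hV1 x h]
  refine ⟨?_, ?_, hVge, fun x hx => hV1 x (by linarith)⟩
  · rw [hVe]
    exact Continuous.if_le hHc continuous_const continuous_const continuous_id
      (fun x hx => by rw [← hx, hs])
  · intro x y l hxy hl0 hl1
    set z := l * x + (1 - l) * y with hzdef
    have hxz : x ≤ z := by nlinarith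
    have hzy : z ≤ y := by nlinarith
    rcases le_or_gt s z with hz | hz
    · rw [hV2 z hz]
      rcases le_or_gt s x with hx | hx
      · rw [hV2 x hx, hV2 y (hx.trans hxy)]
        exact hk x y l hxy hl0 hl1
      · rw [hV1 x hx, hV2 y (hz.trans hzy)]
        rcases eq_or_lt_of_le hzy with hzy' | hzy'
        · have hxy' : x < y := lt_of_lt_of_le hx (hz.trans_eq hzy')
          have hl : l = 0 := by nlinarith
          rw [hzy', hl]
          have := hup s y (le_refl s) (hz.trans hzy)
          linarith
        · have hsy : s < y := lt_of_le_of_lt hz hzy'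
          set μ := (y - z) / (y - s) with hμdef
          have hμ0 : 0 < μ := div_pos (by linarith) (by linarith)
          have hμ1 : μ ≤ 1 := (div_le_one (by linarith)).2 (by linarith)
          have hl2 : μ * (y - s) = y - z := div_mul_cancel₀ _ (by linarith : y - s ≠ 0)
          have hco : μ * s + (1 - μ) * y = z := by linear_combination (-1 : ℝ) * hl2
          have h1 := hk s y μ hsy.le hμ0.le hμ1
          rw [hco, hs] at h1
          have hyz : y - z = l * (y - x) := by rw [hzdef]; ring
          have hμl : l ≤ μ := by
            rw [hμdef, le_div_iff₀ (by linarith)]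
            rw [hyz]
            have : s ≤ y := hsy.le
            nlinarith
          have hym : H S + K ≤ H y + K := by linarith [hmin y]
          nlinarith [mul_le_mul_of_nonneg_left hym (sub_nonneg.2 hμl)]
    · rw [hV1 z hz, hV1 x (lt_of_le_of_lt hxz hz)]
      have h1 := hVge y
      nlinarith [mul_le_mul_of_nonneg_left (by linarith : H S + K ≤ V y + K)
        (by linarith : (0:ℝ) ≤ 1 - l)]

private lemma int_props {K : ℝ} {V : ℝ → ℝ} (hVc : Continuous V) {m : ℝ} (hm : ∀ x, m ≤ V x)
    {c d : ℝ} (hcd : ∀ x, x ≤ c → V x = d) (hk : KConv K V)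
    (ν : Measure ℝ) [IsProbabilityMeasure ν] (hν : ν (Iio 0) = 0) :
    Continuous (fun y => ∫ ξ, V (y - ξ) ∂ν) ∧
    (∀ y, m ≤ ∫ ξ, V (y - ξ) ∂ν) ∧
    KConv K (fun y => ∫ ξ, V (y - ξ) ∂ν) := by
  have h0 : ∀ᵐ ξ ∂ν, 0 ≤ ξ := by
    rw [ae_iff]
    simp only [not_le]; exact hν
  have hbd : ∀ b : ℝ, ∃ M, ∀ x, x ≤ b → |V x| ≤ M := by
    intro b
    obtain ⟨M, hM⟩ := (isCompact_Icc : IsCompact (Icc c (max c b))).exists_bound_of_continuousOn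
      hVc.continuousOn
    refine ⟨max M |d|, fun x hx => ?_⟩
    rcases le_or_gt x c with h | h
    · rw [hcd x h]
      exact le_max_right _ _
    · have := hM x ⟨h.le, le_trans hx (le_max_right c b)⟩
      rw [Real.norm_eq_abs] at this
      exact le_trans this (le_max_left _ _)
  have hmeas : ∀ y : ℝ, AEStronglyMeasurable (fun ξ => V (y - ξ)) ν :=
    fun y => (hVc.comp (continuous_const.sub continuous_id)).aestronglyMeasurable
  have hint : ∀ y : ℝ, Integrable (fun ξ => V (y - ξ)) ν := by
    intro y
    obtain ⟨M, hM⟩ := hbd y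
    exact Integrable.mono' (integrable_const M) (hmeas y)
      (h0.mono fun ξ hξ => by rw [Real.norm_eq_abs]; exact hM _ (by linarith))
  refine ⟨?_, ?_, ?_⟩
  · rw [continuous_iff_continuousAt]
    intro y₀
    obtain ⟨M, hM⟩ := hbd (y₀ + 1)
    apply continuousAt_of_dominated (bound := fun _ => M)
    · exact Eventually.of_forall fun y => hmeas y
    · refine (eventually_lt_nhds (by linarith : y₀ < y₀ + 1)).mono fun y hy => ?_
      exact h0.mono fun ξ hξ => by rw [Real.norm_eq_abs]; exact hM _ (by linarith)
    · exact integrable_const M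
    · exact Eventually.of_forall fun ξ =>
        (hVc.comp (continuous_id.sub continuous_const)).continuousAt
  · intro y
    have h1 : ∫ (_ : ℝ), m ∂ν = m := by simp
    calc m = ∫ (_ : ℝ), m ∂ν := h1.symm
      _ ≤ ∫ ξ, V (y - ξ) ∂ν := integral_mono (integrable_const m) (hint y) fun ξ => hm _
  · intro x y l hxy hl0 hl1
    simp only
    have key : ∀ ξ : ℝ, V (l * x + (1 - l) * y - ξ) ≤ l * V (x - ξ) + (1 - l) * (V (y - ξ) + K) := by
      intro ξ
      have h1 := hk (x - ξ) (y - ξ) l (by linarith) hl0 hl1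
      have he : l * (x - ξ) + (1 - l) * (y - ξ) = l * x + (1 - l) * y - ξ := by ring
      rwa [he] at h1
    have hintR : Integrable (fun ξ => l * V (x - ξ) + (1 - l) * (V (y - ξ) + K)) ν :=
      ((hint x).const_mul l).add (((hint y).add (integrable_const K)).const_mul (1 - l))
    calc ∫ ξ, V (l * x + (1 - l) * y - ξ) ∂ν
        ≤ ∫ ξ, (l * V (x - ξ) + (1 - l) * (V (y - ξ) + K)) ∂ν :=
          integral_mono (hint _) hintR fun ξ => key ξ
      _ = l * (∫ ξ, V (x - ξ) ∂ν) + (1 - l) * ((∫ ξ, V (y - ξ) ∂ν) + K) := by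
          have A : Integrable (fun ξ => l * V (x - ξ)) ν := (hint x).const_mul l
          have B : Integrable (fun ξ => (1 - l) * (V (y - ξ) + K)) ν :=
            (((hint y).add (integrable_const K)).const_mul (1 - l))
          have e1 : ∫ ξ, (l * V (x - ξ) + (1 - l) * (V (y - ξ) + K)) ∂ν
              = (∫ ξ, l * V (x - ξ) ∂ν) + ∫ ξ, (1 - l) * (V (y - ξ) + K) ∂ν :=
            integral_add A B
          have e4 : ∫ ξ, (V (y - ξ) + K) ∂ν = (∫ ξ, V (y - ξ) ∂ν) + ∫ (_ : ℝ), K ∂ν :=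
            integral_add (hint y) (integrable_const K)
          rw [e1, integral_const_mul, integral_const_mul, e4, integral_const]
          simp

theorem stmt1
    (T : ℕ) (hT : 2 ≤ T)
    (α : ℝ) (hα0 : 0 < α) (hα1 : α ≤ 1)
    (K : ℕ → ℝ) (hK0 : ∀ t, t < T → 0 ≤ K t)
    (hKmono : ∀ t, t + 2 ≤ T → α * K (t + 1) ≤ K t)
    (ν : ℕ → MeasureTheory.Measure ℝ)
    (hprob : ∀ t, MeasureTheory.IsProbabilityMeasure (ν t))
    (hpos : ∀ t, ν t (Set.Iio 0) = 0)
    (F : ℕ → ℝ → ℝ) (hF : ∀ t x, F t x = (ν t (Set.Iic x)).toReal)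
    (C : ℕ → ℝ → ℝ)
    (hCconv : ∀ t, t < T → ConvexOn ℝ Set.univ (C t))
    (hCcoer : ∀ t, t < T → Filter.Tendsto (C t) (Filter.cocompact ℝ) Filter.atTop)
    (Hstar Vstar : ℕ → ℝ → ℝ)
    (hVstarT : ∀ x, Vstar T x = 0)
    (hHstar : ∀ t, t < T → ∀ y,
      Hstar t y = C t y + α * ∫ ξ, Vstar (t + 1) (y - ξ) ∂(ν t))
    (hVstar : ∀ t, t < T → ∀ x,
      Vstar t x = sInf ((fun y => K t * (if x < y then (1 : ℝ) else 0) + Hstar t y) '' Set.Ici x))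
    :
    ∀ t, t < T → ∃ Sst : ℝ, IsLeast {x | ∀ y, Hstar t x ≤ Hstar t y} Sst ∧
      ∃ sst : ℝ, IsGreatest {x | x ≤ Sst ∧ Hstar t x = Hstar t Sst + K t} sst ∧
        (∀ x, x < sst → Vstar t x = Hstar t Sst + K t) ∧
        (∀ x, sst ≤ x → Vstar t x = Hstar t x) := by
  have key : ∀ n t, t + n = T →
      (Continuous (Vstar t) ∧ KConv (if t < T then K t else 0) (Vstar t) ∧
       (∃ m, (∀ x, m ≤ Vstar t x) ∧ ∃ c d, ∀ x, x ≤ c → Vstar t x = d)) ∧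
      (t < T → ∃ Sst : ℝ, IsLeast {x | ∀ y, Hstar t x ≤ Hstar t y} Sst ∧
        ∃ sst : ℝ, IsGreatest {x | x ≤ Sst ∧ Hstar t x = Hstar t Sst + K t} sst ∧
          (∀ x, x < sst → Vstar t x = Hstar t Sst + K t) ∧
          (∀ x, sst ≤ x → Vstar t x = Hstar t x)) := by
    intro n
    induction n with
    | zero =>
      intro t ht
      have htT : t = T := by omega
      have hV0 : Vstar t = fun _ => (0:ℝ) := by rw [htT]; exact funext hVstarT
      refine ⟨⟨by rw [hV0]; exact continuous_const, ?_, 0, ?_, 0, 0, ?_⟩,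
        fun h => absurd h (by omega)⟩
      · rw [if_neg (by omega : ¬ t < T)]
        intro x y l hxy hl0 hl1
        simp [hV0]
      · intro x; rw [hV0]
      · intro x hx; rw [hV0]
    | succ n ih =>
      intro t ht
      have htT : t < T := by omega
      obtain ⟨hVc, hVk, m1, hm1, c1, d1, hcd1⟩ := (ih (t + 1) (by omega)).1
      haveI := hprob t
      obtain ⟨hIc, hIm, hIk⟩ := int_props hVc hm1 hcd1 hVk (ν t) (hpos t)
      set I := fun y => ∫ ξ, Vstar (t + 1) (y - ξ) ∂(ν t) with hIdef
      have hαK : α * (if t + 1 < T then K (t + 1) else 0) ≤ K t := by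
        by_cases h : t + 1 < T
        · rw [if_pos h]; exact hKmono t (by omega)
        · rw [if_neg h, mul_zero]; exact hK0 t htT
      have hHeq : Hstar t = fun y => C t y + α * I y := funext fun y => hHstar t htT y
      have hCc : Continuous (C t) :=
        continuousOn_univ.mp ((hCconv t htT).continuousOn isOpen_univ)
      have hHc : Continuous (Hstar t) := by
        rw [hHeq]
        exact hCc.add (continuous_const.mul hIc)
      have hHk : KConv (K t) (Hstar t) := by
        rw [hHeq]
        exact ((kconv_of_convex (hCconv t htT)).add (KConv.smul hα0.le hIk)).mono
          (by rw [zero_add]; exact hαK)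
      have hHcoer : Tendsto (Hstar t) (cocompact ℝ) atTop := by
        rw [hHeq]
        have h1 : Tendsto (fun y => C t y + α * m1) (cocompact ℝ) atTop :=
          tendsto_atTop_add_const_right _ _ (hCcoer t htT)
        refine tendsto_atTop_mono (fun y => ?_) h1
        have := mul_le_mul_of_nonneg_left (hIm y) hα0.le
        show C t y + α * m1 ≤ C t y + α * I y
        linarith
      obtain ⟨S, hSleast, s, hsgreat, hlow, hup⟩ := stage (hK0 t htT) hHc hHcoer hHk
      have hs : Hstar t s = Hstar t S + K t := hsgreat.1.2
      have hsS : s ≤ S := hsgreat.1.1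
      obtain ⟨hV1, hV2⟩ := stageV (hK0 t htT) hSleast.1 hsS hs hlow hup (hVstar t htT)
      obtain ⟨hVtc, hVtk, hVtm, hVtcd⟩ :=
        Vprops (hK0 t htT) hHc hSleast.1 hs hHk hV1 hV2 hup
      exact ⟨⟨hVtc, by rw [if_pos htT]; exact hVtk,
        Hstar t S, hVtm, s - 1, Hstar t S + K t, hVtcd⟩,
        fun _ => ⟨S, hSleast, s, hsgreat, hV1, hV2⟩⟩
  intro t ht
  exact (key (T - t) t (by omega)).2 ht
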